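/- Let s : ℕ → ℕ be a function with s(n) → ∞ and s(n) = o(n) as n → ∞. Then there exists a constant K > 1 such that for all sufficiently large n the following holds: suppose f is an s(n)-approximately local diagonal bijection of V(Q_n), and let G = (V(Q_n), E′) where E′ = { uv ∈ E(Q_n) : f(u)f_⋆(v) ∈ E(Q_n) and f(v)f_⋆(u) ∈ E(Q_n) }. Then G has minimum degree at least n − K·s(n). -/

import Mathlib

open MeasureTheory Filter Set Asymptotics Topology

noncomputable section

/-- Vertices of the `n`-dimensional hypercube. -/
abbrev V (n : ℕ) : Type := Fin n → Bool

/-- The hypercube graph `Q_n`. -/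
def Q (n : ℕ) : SimpleGraph (V n) :=
  SimpleGraph.fromRel (fun u v => hammingDist u v = 1)

/-- The neighbourhood of a vertex in `Q_n`. -/
def nbhd (n : ℕ) (v : V n) : Set (V n) := (Q n).neighborSet v

/-- The neighbourhood of a set of vertices. -/
def nbhdSet (n : ℕ) (A : Set (V n)) : Set (V n) := ⋃ v ∈ A, nbhd n v

/-- The set of vertices at graph distance exactly `k` from the set `A`. -/
def sphereSet (n k : ℕ) (A : Set (V n)) : Set (V n) :=
  {w | (∃ v ∈ A, (Q n).dist v w = k) ∧ ∀ v ∈ A, k ≤ (Q n).dist v w}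

/-- The ball of radius `r` about `v` (as a set of vertices). -/
def ball (n : ℕ) (v : V n) (r : ℕ) : Set (V n) := {w | (Q n).dist v w ≤ r}

/-- `χ^(r)(u) ≅ lam^(r)(w)` : the coloured `r`-balls around `u` (coloured by `χ`) and
`w` (coloured by `lam`) are isomorphic as coloured graphs. -/
def LocallyEq {C : Type} (n r : ℕ) (χ lam : V n → C) (u w : V n) : Prop :=
  ∃ φ : ((Q n).induce (ball n u r)) ≃g ((Q n).induce (ball n w r)),
    ∀ x : ball n u r, χ x.1 = lam ((φ x).1)

/-- `d(χ^(r)(u), lam^(r)(w)) ≤ m` : some isomorphism of the `r`-balls realises at most `m`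
colour disagreements. -/
def BallDistLE {C : Type} (n r : ℕ) (χ lam : V n → C) (u w : V n) (m : ℝ) : Prop :=
  ∃ φ : ((Q n).induce (ball n u r)) ≃g ((Q n).induce (ball n w r)),
    (({x : ball n u r | χ x.1 ≠ lam ((φ x).1)}.ncard : ℝ)) ≤ m

/-- A colouring is `r`-distinguishable if every `r`-locally equivalent colouring is obtained
from it by a graph automorphism. -/
def Distinguishable {C : Type} (n r : ℕ) (χ : V n → C) : Prop :=
  ∀ lam : V n → C,
    (∃ f : V n ≃ V n, ∀ v, LocallyEq n r χ lam v (f v)) →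
    ∃ g : (Q n) ≃g (Q n), lam = fun v => χ (g.symm v)

/-- `Isom^(r)(χ)` : the set of bijections `f` with `χ^(r)(v) ≅ (χ ∘ f⁻¹)^(r)(f v)` for all `v`. -/
def IsomSet {C : Type} (n r : ℕ) (χ : V n → C) : Set (V n ≃ V n) :=
  {f | ∀ v, LocallyEq n r χ (fun x => χ (f.symm x)) v (f v)}

/-- `Cluster^r_R` : bijections `h` such that `|Γ^r(h(Γ(v)))| ≤ binom(n, r+1) + R` for all `v`. -/
def ClusterSet (n r : ℕ) (R : ℝ) : Set (V n ≃ V n) :=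
  {h | ∀ v, ((sphereSet n r (⇑h '' nbhd n v)).ncard : ℝ) ≤ (n.choose (r+1) : ℝ) + R}

/-- `g` is a dual of `f` (at level `s`): `|f(Γ(v)) ∩ Γ(g(v))| ≥ n − s` for all `v`. -/
def IsDualF (n : ℕ) (s : ℝ) (f g : V n → V n) : Prop :=
  ∀ v, (n : ℝ) - s ≤ (((f '' nbhd n v) ∩ nbhd n (g v)).ncard : ℝ)

/-- `f` is `s`-approximately local: it has a dual at level `s`. -/
def ApproxLocalF (n : ℕ) (s : ℝ) (f : V n → V n) : Prop :=
  ∃ g : V n → V n, IsDualF n s f g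

/-- `Local_s` : the set of `s`-approximately local bijections. -/
def LocalSet (n : ℕ) (s : ℝ) : Set (V n ≃ V n) :=
  {f | ApproxLocalF n s ⇑f}

/-- `Mono^t_s` : bijections in `Cluster¹_s` for which, for every `v`, at most one vertex `w`
has `|f(Γ(v)) ∩ Γ(w)| > t`. -/
def MonoSet (n : ℕ) (s t : ℝ) : Set (V n ≃ V n) :=
  {f | f ∈ ClusterSet n 1 s ∧ ∀ v w₁ w₂ : V n,
      t < (((⇑f '' nbhd n v) ∩ nbhd n w₁).ncard : ℝ) →
      t < (((⇑f '' nbhd n v) ∩ nbhd n w₂).ncard : ℝ) → w₁ = w₂}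

/-- The dual `f_⋆` of `f` : for each `v`, a vertex `w` maximising `|f(Γ(v)) ∩ Γ(w)|`
(which is the unique dual vertex whenever `f` is `s`-approximately local with `s < n/2`). -/
def dualF (n : ℕ) (f : V n → V n) : V n → V n :=
  fun v => Classical.epsilon fun w =>
    ∀ w', ((f '' nbhd n v) ∩ nbhd n w').ncard ≤ ((f '' nbhd n v) ∩ nbhd n w).ncard

/-- The Bernoulli measure on `Bool`: `false` (colour 0) has probability `p`,
`true` (colour 1) has probability `1 - p`. -/
def bern (p : ℝ) : Measure Bool :=
  ENNReal.ofReal p • Measure.dirac false + ENNReal.ofReal (1 - p) • Measure.dirac true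

/-- The law of a random `(p, 1-p)`-colouring of `Q_n`: i.i.d. Bernoulli colours. -/
def colMeasure (n : ℕ) (p : ℝ) : Measure (V n → Bool) :=
  Measure.pi fun _ => bern p

/-- The uniform measure on `Fin q`. -/
def unifFin (q : ℕ) : Measure (Fin q) :=
  ((q : ENNReal))⁻¹ • Measure.count

/-- The law of a random `q`-colouring of `Q_n`: i.i.d. uniform colours. -/
def qColMeasure (n q : ℕ) : Measure (V n → Fin q) :=
  Measure.pi fun _ => unifFin q


/-! ### Auxiliary lemmas for the proof -/

section Helpers
open Finset

variable {n : ℕ}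

def fl (v : V n) (i : Fin n) : V n := Function.update v i (!v i)

@[simp] lemma flip_apply_self (v : V n) (i : Fin n) : fl v i i = !v i :=
  Function.update_self _ _ _

lemma flip_apply_ne (v : V n) {i j : Fin n} (h : j ≠ i) : fl v i j = v j :=
  Function.update_of_ne h _ _

@[simp] lemma fl_flip_flip (v : V n) (i : Fin n) : fl (fl v i) i = v := by
  funext j
  rcases eq_or_ne j i with rfl | h
  · simp
  · rw [flip_apply_ne _ h, flip_apply_ne _ h]

lemma flip_ne (v : V n) (i : Fin n) : fl v i ≠ v := by
  intro h
  have := congrFun h i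
  simp at this

lemma flip_right_injective (v : V n) : Function.Injective (fl v) := by
  intro i j h
  by_contra hij
  have h1 := congrFun h i
  rw [flip_apply_self, flip_apply_ne v hij] at h1
  simp at h1

lemma flip_comm {v : V n} {i j : Fin n} (h : i ≠ j) :
    fl (fl v i) j = fl (fl v j) i := by
  funext k
  rcases eq_or_ne k i with rfl | hki
  · rw [flip_apply_ne _ h, flip_apply_self, flip_apply_self, flip_apply_ne _ h]
  · rcases eq_or_ne k j with rfl | hkj
    · rw [flip_apply_self, flip_apply_ne _ (Ne.symm h), flip_apply_ne _ (Ne.symm h),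
        flip_apply_self]
    · rw [flip_apply_ne _ hkj, flip_apply_ne _ hki, flip_apply_ne _ hki, flip_apply_ne _ hkj]

lemma diff_flip_mem {x y : V n} {k : Fin n} (h : x k ≠ y k) :
    ({i | x i ≠ fl y k i} : Finset (Fin n)) = ({i | x i ≠ y i} : Finset (Fin n)).erase k := by
  ext j
  rcases eq_or_ne j k with rfl | hj
  · simp [h]
  · simp [hj, flip_apply_ne y hj]

lemma diff_flip_not_mem {x y : V n} {k : Fin n} (h : x k = y k) :
    ({i | x i ≠ fl y k i} : Finset (Fin n)) = insert k ({i | x i ≠ y i} : Finset (Fin n)) := by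
  ext j
  rcases eq_or_ne j k with rfl | hj
  · simp [h]
  · simp [hj, flip_apply_ne y hj]

lemma hd_flip_of_ne {x y : V n} {k : Fin n} (h : x k ≠ y k) :
    hammingDist x (fl y k) = hammingDist x y - 1 := by
  rw [hammingDist, hammingDist, diff_flip_mem h, Finset.card_erase_of_mem]
  simp [h]

lemma hd_flip_of_eq {x y : V n} {k : Fin n} (h : x k = y k) :
    hammingDist x (fl y k) = hammingDist x y + 1 := by
  rw [hammingDist, hammingDist, diff_flip_not_mem h, Finset.card_insert_of_notMem]
  simp [h]

lemma hd_flip_self (v : V n) (i : Fin n) : hammingDist (fl v i) v = 1 := by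
  rw [hammingDist_comm]
  have h : v i = v i := rfl
  have := hd_flip_of_eq (x := v) (y := v) (k := i) rfl
  rw [hammingDist_self] at this
  exact this

lemma hd_eq_one_iff {x y : V n} : hammingDist x y = 1 ↔ ∃ i, x = fl y i := by
  constructor
  · intro h
    rw [hammingDist, Finset.card_eq_one] at h
    obtain ⟨i, hi⟩ := h
    refine ⟨i, funext fun j => ?_⟩
    rcases eq_or_ne j i with rfl | hj
    · have : j ∈ ({k | x k ≠ y k} : Finset (Fin n)) := by rw [hi]; exact Finset.mem_singleton_self j
      simp only [Finset.mem_filter, Finset.mem_univ, true_and] at this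
      simp only [flip_apply_self]
      revert this; cases x j <;> cases y j <;> simp
    · have : j ∉ ({k | x k ≠ y k} : Finset (Fin n)) := by rw [hi]; simp [hj]
      simp only [Finset.mem_filter, Finset.mem_univ, true_and, not_not] at this
      rw [flip_apply_ne y hj]; exact this
  · rintro ⟨i, rfl⟩
    exact hd_flip_self y i

lemma adj_iff {a b : V n} : (Q n).Adj a b ↔ hammingDist a b = 1 := by
  rw [Q, SimpleGraph.fromRel_adj]
  constructor
  · rintro ⟨h, h1 | h1⟩
    · exact h1
    · rw [hammingDist_comm]; exact h1
  · intro h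
    exact ⟨fun he => by simp [he, hammingDist_self] at h, Or.inl h⟩

lemma mem_nbhd {a v : V n} : a ∈ nbhd n v ↔ hammingDist a v = 1 := by
  rw [nbhd, SimpleGraph.mem_neighborSet, adj_iff, hammingDist_comm]

lemma nbhd_eq_image (v : V n) :
    nbhd n v = ↑(Finset.image (fl v) Finset.univ) := by
  ext x
  simp only [Finset.mem_coe, Finset.mem_image, Finset.mem_univ, true_and, mem_nbhd, hd_eq_one_iff]
  exact ⟨fun ⟨i, h⟩ => ⟨i, h.symm⟩, fun ⟨i, h⟩ => ⟨i, h.symm⟩⟩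

lemma ncard_nbhd (v : V n) : (nbhd n v).ncard = n := by
  rw [nbhd_eq_image, Set.ncard_coe_finset,
    Finset.card_image_of_injective _ (flip_right_injective v), Finset.card_univ, Fintype.card_fin]

def goodIdx (f : V n → V n) (u w : V n) : Finset (Fin n) :=
  {j | hammingDist (f (fl u j)) w = 1}

lemma inter_eq_image (f : V n → V n) (u w : V n) :
    (f '' nbhd n u ∩ nbhd n w) = ↑((goodIdx f u w).image (fun j => f (fl u j))) := by
  ext x
  simp only [Set.mem_inter_iff, Set.mem_image, mem_nbhd, hd_eq_one_iff, Finset.mem_coe,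
    Finset.mem_image, goodIdx, Finset.mem_filter, Finset.mem_univ, true_and]
  constructor
  · rintro ⟨⟨a, ⟨i, rfl⟩, rfl⟩, j, hj⟩
    exact ⟨i, ⟨j, hj⟩, rfl⟩
  · rintro ⟨j, hj, rfl⟩
    exact ⟨⟨fl u j, ⟨j, rfl⟩, rfl⟩, hj⟩

lemma ncard_inter' (f : V n → V n) (u w : V n)
    (hinj : Function.Injective (fun j : Fin n => f (fl u j))) :
    (f '' nbhd n u ∩ nbhd n w).ncard = (goodIdx f u w).card := by
  rw [inter_eq_image f u w, Set.ncard_coe_finset, Finset.card_image_of_injective _ hinj]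

lemma flip_flip_eq {v : V n} {i j k l : Fin n} (hij : i ≠ j)
    (h : fl (fl v i) k = fl (fl v j) l) : (k = i ∧ l = j) ∨ (k = j ∧ l = i) := by
  rcases eq_or_ne k i with rfl | hk
  · left
    refine ⟨rfl, ?_⟩
    rw [fl_flip_flip] at h
    have : fl v j = fl v l := by
      have := congrArg (fun w => fl w l) h
      simpa [fl_flip_flip] using this.symm
    exact (flip_right_injective v this).symm
  · have hil : l = i := by
      by_contra hl
      have h1 := congrFun h i
      rw [flip_apply_ne _ (Ne.symm hk), flip_apply_self,
        flip_apply_ne _ (fun hx : i = l => hl hx.symm), flip_apply_ne _ hij] at h1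
      simp at h1
    subst hil
    refine Or.inr ⟨?_, rfl⟩
    by_contra hkj
    have h2 := congrFun h j
    rw [flip_apply_ne _ (fun hx : j = k => hkj hx.symm)] at h2
    have e1 : fl v l j = v j := flip_apply_ne _ (Ne.symm hij)
    have e2 : fl (fl v j) l j = !v j := by
      rw [flip_apply_ne _ (Ne.symm hij), flip_apply_self]
    rw [e1, e2] at h2
    simp at h2

lemma dualF_spec (f : V n → V n) (v w : V n) :
    ((f '' nbhd n v) ∩ nbhd n w).ncard ≤ ((f '' nbhd n v) ∩ nbhd n (dualF n f v)).ncard := by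
  have hne : Nonempty (V n) := ⟨fun _ => false⟩
  have hex : ∃ z : V n, ∀ w', ((f '' nbhd n v) ∩ nbhd n w').ncard ≤
      ((f '' nbhd n v) ∩ nbhd n z).ncard := by
    obtain ⟨z, hz⟩ := Finite.exists_max (fun w => ((f '' nbhd n v) ∩ nbhd n w).ncard)
    exact ⟨z, hz⟩
  exact Classical.epsilon_spec hex w

section Main
variable {s : ℕ} {f g : V n → V n}

lemma card_goodIdx_dual (hf : Function.Injective f) (hdual : IsDualF n s f g) (u : V n) :
    n ≤ (goodIdx f u (dualF n f u)).card + s := by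
  have h1 := hdual u
  have h2 := dualF_spec f u (g u)
  rw [ncard_inter' f u (dualF n f u) (fun a b hab => flip_right_injective u (hf hab))] at h2
  have h3 : (n : ℝ) - s ≤ ((goodIdx f u (dualF n f u)).card : ℝ) := by
    calc (n:ℝ) - s ≤ _ := h1
    _ ≤ _ := by exact_mod_cast h2
  have hn : (n : ℝ) ≤ ((goodIdx f u (dualF n f u)).card : ℝ) + s := by linarith
  exact_mod_cast hn

lemma nbhd_finset_card (w : V n) : (Finset.image (fl w) Finset.univ).card = n := by
  rw [Finset.card_image_of_injective _ (flip_right_injective w), Finset.card_univ, Fintype.card_fin]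

lemma z_injective (hf : Function.Injective f) (hdual : IsDualF n s f g)
    (hn : 2 * s + 2 < n) (v : V n) :
    Function.Injective (fun i : Fin n => dualF n f (fl v i)) := by
  intro i j hzeq
  by_contra hij
  simp only at hzeq
  set ζ := dualF n f (fl v i) with hζ
  set A₁ := (goodIdx f (fl v i) ζ).image (fun k => f (fl (fl v i) k)) with hA₁def
  set A₂ := (goodIdx f (fl v j) ζ).image (fun k => f (fl (fl v j) k)) with hA₂def
  have hsub : A₁ ∪ A₂ ⊆ Finset.image (fl ζ) Finset.univ := by
    intro x hx
    rw [Finset.mem_union] at hx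
    have : hammingDist x ζ = 1 := by
      rcases hx with hx | hx <;>
      · simp only [hA₁def, hA₂def, Finset.mem_image, goodIdx, Finset.mem_filter] at hx
        obtain ⟨k, ⟨_, hk⟩, rfl⟩ := hx
        exact hk
    rw [hd_eq_one_iff] at this
    obtain ⟨m, rfl⟩ := this
    exact Finset.mem_image.2 ⟨m, Finset.mem_univ m, rfl⟩
  have hinter : A₁ ∩ A₂ ⊆ {f v, f (fl (fl v i) j)} := by
    intro x hx
    rw [Finset.mem_inter] at hx
    obtain ⟨hx1, hx2⟩ := hx
    simp only [hA₁def, hA₂def, Finset.mem_image] at hx1 hx2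
    obtain ⟨k, _, hk⟩ := hx1
    obtain ⟨l, _, hl⟩ := hx2
    have hkl : fl (fl v i) k = fl (fl v j) l := hf (hk.trans hl.symm)
    rcases flip_flip_eq hij hkl with ⟨rfl, _⟩ | ⟨rfl, _⟩
    · rw [← hk, fl_flip_flip]
      exact Finset.mem_insert_self _ _
    · rw [← hk]
      exact Finset.mem_insert_of_mem (Finset.mem_singleton_self _)
  have hc1 : n ≤ A₁.card + s := by
    rw [hA₁def, Finset.card_image_of_injective _
      (fun a b h => flip_right_injective (fl v i) (hf h))]
    exact card_goodIdx_dual hf hdual (fl v i)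
  have hc2 : n ≤ A₂.card + s := by
    rw [hA₂def, Finset.card_image_of_injective _
      (fun a b h => flip_right_injective (fl v j) (hf h))]
    have := card_goodIdx_dual hf hdual (fl v j)
    rwa [← hzeq] at this
  have hcu : (A₁ ∪ A₂).card ≤ n := by
    calc (A₁ ∪ A₂).card ≤ (Finset.image (fl ζ) Finset.univ).card := Finset.card_le_card hsub
    _ = n := nbhd_finset_card ζ
  have hci : (A₁ ∩ A₂).card ≤ 2 := by
    calc (A₁ ∩ A₂).card ≤ ({f v, f (fl (fl v i) j)} : Finset (V n)).card :=
      Finset.card_le_card hinter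
    _ ≤ 2 := Finset.card_insert_le _ _ |>.trans (by simp)
  have := Finset.card_union_add_card_inter A₁ A₂
  omega

end Main

lemma sum_card_filter_mem {s : ℕ} (A C : Finset (Fin n)) (Bad : Fin n → Finset (Fin n))
    (hBad : ∀ j, (Bad j).card ≤ s) :
    ∑ i ∈ A, (C.filter (fun j => i ∈ Bad j)).card ≤ C.card * s := by
  have h1 : ∀ i ∈ A, (C.filter (fun j => i ∈ Bad j)).card
      = ∑ j ∈ C, if i ∈ Bad j then 1 else 0 := by
    intro i _
    rw [Finset.card_filter]
  rw [Finset.sum_congr rfl h1, Finset.sum_comm]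
  have h2 : ∀ j ∈ C, (∑ i ∈ A, if i ∈ Bad j then 1 else 0) ≤ s := by
    intro j _
    rw [← Finset.card_filter]
    refine le_trans (Finset.card_le_card ?_) (hBad j)
    intro x hx
    exact (Finset.mem_filter.1 hx).2
  calc ∑ j ∈ C, (∑ i ∈ A, if i ∈ Bad j then 1 else 0) ≤ ∑ j ∈ C, s :=
        Finset.sum_le_sum h2
    _ = C.card * s := by rw [Finset.sum_const, smul_eq_mul]

lemma core {s : ℕ} (hs : 4 ≤ s) (hn : 100 * s ≤ n)
    (z : Fin n → V n) (hz : Function.Injective z)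
    (Bad : Fin n → Finset (Fin n)) (hBad : ∀ i, (Bad i).card ≤ s)
    (hlink : ∀ i j, i ≠ j → j ∉ Bad i → i ∉ Bad j → hammingDist (z i) (z j) ≤ 2)
    (c : V n)
    (hmax : ∀ w : V n,
      ({i | hammingDist (z i) w = 1} : Finset (Fin n)).card ≤
      ({i | hammingDist (z i) c = 1} : Finset (Fin n)).card) :
    ({i | hammingDist (z i) c ≠ 1} : Finset (Fin n)).card ≤ 3 * s := by
  by_contra hb
  push_neg at hb
  set GoodC : Finset (Fin n) := {i | hammingDist (z i) c = 1} with hGoodC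
  set B : Finset (Fin n) := {i | hammingDist (z i) c ≠ 1} with hB
  set M := GoodC.card with hM
  -- M + B.card = n
  have hMn : M + B.card = n := by
    rw [hM, hGoodC, hB]
    rw [Finset.card_filter_add_card_filter_not (fun i => hammingDist (z i) c = 1)]
    exact Fintype.card_fin n
  -- Part A : M ≤ 3 * s
  have hMle : M ≤ 3 * s := by
    set B' : Finset (Fin n) := B.filter (fun i => z i ≠ c) with hB'
    have hB'card : B.card ≤ B'.card + 1 := by
      have hsplit := Finset.card_filter_add_card_filter_not
        (s := B) (p := fun i => z i ≠ c)
      rw [← hB'] at hsplit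
      have hone : (B.filter (fun i => ¬ z i ≠ c)).card ≤ 1 := by
        refine Finset.card_le_one.2 fun a ha b hbb => ?_
        have ha' : z a = c := not_not.1 (Finset.mem_filter.1 ha).2
        have hb' : z b = c := not_not.1 (Finset.mem_filter.1 hbb).2
        exact hz (ha'.trans hb'.symm)
      omega
    -- each i ∈ B' sees at most 3 elements of GoodC through links
    have hG3 : ∀ i ∈ B',
        ((GoodC.filter (fun j => j ∉ Bad i ∧ i ∉ Bad j)).card ≤ 3) := by
      intro i hi
      have hiB : i ∈ B := (Finset.mem_filter.1 hi).1
      have hzic : z i ≠ c := (Finset.mem_filter.1 hi).2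
      have hdne : hammingDist (z i) c ≠ 1 := by
        have := Finset.mem_filter.1 hiB
        simpa using this.2
      have hd0 : hammingDist (z i) c ≠ 0 := hammingDist_ne_zero.2 hzic
      have hd2 : 2 ≤ hammingDist (z i) c := by omega
      set K : Finset (Fin n) := {k | hammingDist (z i) (fl c k) ≤ 2} with hK
      have hcard : (GoodC.filter (fun j => j ∉ Bad i ∧ i ∉ Bad j)).card ≤ K.card := by
        have himg : Finset.image z (GoodC.filter (fun j => j ∉ Bad i ∧ i ∉ Bad j))
            ⊆ Finset.image (fl c) K := by
          intro x hx
          obtain ⟨j, hj, rfl⟩ := Finset.mem_image.1 hx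
          have hj' := Finset.mem_filter.1 hj
          have hj1 : hammingDist (z j) c = 1 := by
            have := Finset.mem_filter.1 hj'.1
            simpa using this.2
          obtain ⟨k, hk⟩ := hd_eq_one_iff.1 hj1
          have hij : i ≠ j := by
            intro h
            rw [h] at hdne
            exact hdne hj1
          have hle : hammingDist (z i) (z j) ≤ 2 :=
            hlink i j hij hj'.2.1 hj'.2.2
          refine Finset.mem_image.2 ⟨k, ?_, hk.symm⟩
          simp only [hK, Finset.mem_filter, Finset.mem_univ, true_and]
          rw [← hk]
          exact hle
        calc (GoodC.filter (fun j => j ∉ Bad i ∧ i ∉ Bad j)).card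
            = (Finset.image z (GoodC.filter (fun j => j ∉ Bad i ∧ i ∉ Bad j))).card :=
              (Finset.card_image_of_injective _ hz).symm
          _ ≤ (Finset.image (fl c) K).card := Finset.card_le_card himg
          _ ≤ K.card := Finset.card_image_le
      have hK3 : K.card ≤ 3 := by
        rcases le_or_gt (hammingDist (z i) c) 3 with h3 | h3
        · have hsub : K ⊆ ({k | z i k ≠ c k} : Finset (Fin n)) := by
            intro k hk
            simp only [hK, Finset.mem_filter, Finset.mem_univ, true_and] at hk
            simp only [Finset.mem_filter, Finset.mem_univ, true_and]
            intro heq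
            rw [hd_flip_of_eq heq] at hk
            omega
          have hcd : ({k | z i k ≠ c k} : Finset (Fin n)).card = hammingDist (z i) c := rfl
          have := Finset.card_le_card hsub
          omega
        · have hKe : K = ∅ := by
            refine Finset.eq_empty_of_forall_notMem fun k hk => ?_
            simp only [hK, Finset.mem_filter, Finset.mem_univ, true_and] at hk
            have ht := hammingDist_triangle (z i) (fl c k) c
            have hfc : hammingDist (fl c k) c = 1 := hd_flip_self c k
            omega
          simp [hKe]
      omega
    have hGlow : ∀ i ∈ B',
        M ≤ (GoodC.filter (fun j => j ∉ Bad i ∧ i ∉ Bad j)).card + s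
          + (GoodC.filter (fun j => i ∈ Bad j)).card := by
      intro i _
      have hsub : GoodC ⊆ (GoodC.filter (fun j => j ∉ Bad i ∧ i ∉ Bad j))
          ∪ Bad i ∪ (GoodC.filter (fun j => i ∈ Bad j)) := by
        intro j hj
        by_cases h1 : j ∈ Bad i
        · exact Finset.mem_union_left _ (Finset.mem_union_right _ h1)
        by_cases h2 : i ∈ Bad j
        · exact Finset.mem_union_right _ (Finset.mem_filter.2 ⟨hj, h2⟩)
        · exact Finset.mem_union_left _
            (Finset.mem_union_left _ (Finset.mem_filter.2 ⟨hj, h1, h2⟩))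
      calc M ≤ ((GoodC.filter (fun j => j ∉ Bad i ∧ i ∉ Bad j))
          ∪ Bad i ∪ (GoodC.filter (fun j => i ∈ Bad j))).card := Finset.card_le_card hsub
        _ ≤ ((GoodC.filter (fun j => j ∉ Bad i ∧ i ∉ Bad j)) ∪ Bad i).card
            + (GoodC.filter (fun j => i ∈ Bad j)).card := Finset.card_union_le _ _
        _ ≤ (GoodC.filter (fun j => j ∉ Bad i ∧ i ∉ Bad j)).card + (Bad i).card
            + (GoodC.filter (fun j => i ∈ Bad j)).card := by
              have := Finset.card_union_le (GoodC.filter (fun j => j ∉ Bad i ∧ i ∉ Bad j)) (Bad i)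
              omega
        _ ≤ _ := by
              have := hBad i
              omega
    have hsum : B'.card * M ≤ B'.card * (3 + s) + M * s := by
      have h1 : B'.card * M = ∑ _i ∈ B', M := by rw [Finset.sum_const, smul_eq_mul]
      have h2 : ∑ _i ∈ B', M ≤ ∑ i ∈ B',
          ((GoodC.filter (fun j => j ∉ Bad i ∧ i ∉ Bad j)).card + s
            + (GoodC.filter (fun j => i ∈ Bad j)).card) := Finset.sum_le_sum hGlow
      have h3 : ∑ i ∈ B',
          ((GoodC.filter (fun j => j ∉ Bad i ∧ i ∉ Bad j)).card + s
            + (GoodC.filter (fun j => i ∈ Bad j)).card)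
          = (∑ i ∈ B', (GoodC.filter (fun j => j ∉ Bad i ∧ i ∉ Bad j)).card)
            + B'.card * s + ∑ i ∈ B', (GoodC.filter (fun j => i ∈ Bad j)).card := by
        rw [Finset.sum_add_distrib, Finset.sum_add_distrib, Finset.sum_const, smul_eq_mul]
      have h4 : (∑ i ∈ B', (GoodC.filter (fun j => j ∉ Bad i ∧ i ∉ Bad j)).card)
          ≤ B'.card * 3 := by
        calc _ ≤ ∑ _i ∈ B', 3 := Finset.sum_le_sum hG3
          _ = B'.card * 3 := by rw [Finset.sum_const, smul_eq_mul]
      have h5 : ∑ i ∈ B', (GoodC.filter (fun j => i ∈ Bad j)).card ≤ M * s :=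
        sum_card_filter_mem B' GoodC Bad hBad
      have := h1 ▸ (h2.trans_eq h3)
      have hfin : B'.card * M ≤ B'.card * 3 + B'.card * s + M * s := by omega
      calc B'.card * M ≤ B'.card * 3 + B'.card * s + M * s := hfin
        _ = B'.card * (3 + s) + M * s := by ring
    -- conclude
    by_contra hM3
    push_neg at hM3
    have hB'3 : 3 * s ≤ B'.card := by omega
    have h5 : (3 * s) * (M - (3 + s)) ≤ B'.card * (M - (3 + s)) :=
      Nat.mul_le_mul_right _ hB'3
    have h6 : B'.card * (M - (3 + s)) ≤ M * s := by
      have : B'.card * (M - (3+s)) + B'.card * (3+s) = B'.card * M := by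
        rw [← Nat.mul_add]
        congr 1
        omega
      omega
    have h7 : s * (3 * (M - (3 + s))) ≤ s * M := by
      calc s * (3 * (M - (3+s))) = 3 * s * (M - (3+s)) := by ring
      _ ≤ M * s := le_trans h5 h6
      _ = s * M := Nat.mul_comm _ _
    have h8 : 3 * (M - (3 + s)) ≤ M := Nat.le_of_mul_le_mul_left h7 (by omega)
    omega
  -- Part B : contradiction
  have hex : ∃ i₀ : Fin n, ((Finset.univ.filter (fun j => i₀ ∈ Bad j)).card ≤ s) := by
    by_contra hc
    push_neg at hc
    have h1 : ∑ i ∈ Finset.univ, ((Finset.univ : Finset (Fin n)).filter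
        (fun j => i ∈ Bad j)).card ≤ (Finset.univ : Finset (Fin n)).card * s :=
      sum_card_filter_mem _ _ Bad hBad
    have h2 : ∑ _i ∈ (Finset.univ : Finset (Fin n)), (s+1) ≤
        ∑ i ∈ Finset.univ, ((Finset.univ : Finset (Fin n)).filter
          (fun j => i ∈ Bad j)).card :=
      Finset.sum_le_sum (fun i _ => hc i)
    rw [Finset.sum_const, smul_eq_mul, Finset.card_univ, Fintype.card_fin] at h2
    rw [Finset.card_univ, Fintype.card_fin] at h1
    have hn0 : 0 < n := by omega
    have h4 := le_trans h2 h1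
    have h3 : n * (s+1) = n * s + n := by ring
    rw [h3] at h4
    have h5 : n * s + n ≤ n * s + 0 := by simpa using h4
    have h6 := Nat.le_of_add_le_add_left h5
    omega
  obtain ⟨i₀, hi₀⟩ := hex
  set G : Finset (Fin n) := {j | j ≠ i₀ ∧ j ∉ Bad i₀ ∧ i₀ ∉ Bad j} with hG
  have hGcard : n ≤ G.card + (2*s + 1) := by
    have hsub : (Finset.univ : Finset (Fin n)) ⊆ G ∪ {i₀} ∪ Bad i₀
        ∪ (Finset.univ.filter (fun j => i₀ ∈ Bad j)) := by
      intro j _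
      by_cases h0 : j = i₀
      · exact Finset.mem_union_left _ (Finset.mem_union_left _
          (Finset.mem_union_right _ (by simp [h0])))
      by_cases h1 : j ∈ Bad i₀
      · exact Finset.mem_union_left _ (Finset.mem_union_right _ h1)
      by_cases h2 : i₀ ∈ Bad j
      · exact Finset.mem_union_right _ (Finset.mem_filter.2 ⟨Finset.mem_univ j, h2⟩)
      · refine Finset.mem_union_left _ (Finset.mem_union_left _
          (Finset.mem_union_left _ ?_))
        simp only [hG, Finset.mem_filter, Finset.mem_univ, true_and]
        exact ⟨h0, h1, h2⟩
    have h3 := Finset.card_le_card hsub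
    have h4 := Finset.card_union_le (G ∪ {i₀} ∪ Bad i₀)
      (Finset.univ.filter (fun j => i₀ ∈ Bad j))
    have h5 := Finset.card_union_le (G ∪ {i₀}) (Bad i₀)
    have h6 := Finset.card_union_le G ({i₀} : Finset (Fin n))
    have h7 : ({i₀} : Finset (Fin n)).card = 1 := Finset.card_singleton _
    have h8 := hBad i₀
    rw [Finset.card_univ, Fintype.card_fin] at h3
    omega
  set G₂ := G.filter (fun j => hammingDist (z j) (z i₀) = 2) with hG₂
  have hG2card : G.card ≤ G₂.card + M := by
    have hsub : G ⊆ G₂ ∪ ({j | hammingDist (z j) (z i₀) = 1} : Finset (Fin n)) := by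
      intro j hj
      have hj' : j ≠ i₀ ∧ j ∉ Bad i₀ ∧ i₀ ∉ Bad j := by
        have := Finset.mem_filter.1 hj
        simpa [hG] using this.2
      have hle : hammingDist (z i₀) (z j) ≤ 2 :=
        hlink i₀ j (Ne.symm hj'.1) hj'.2.1 hj'.2.2
      have hne : hammingDist (z j) (z i₀) ≠ 0 :=
        hammingDist_ne_zero.2 (fun h => hj'.1 (hz h))
      rw [hammingDist_comm] at hle
      interval_cases h : hammingDist (z j) (z i₀)
      · omega
      · exact Finset.mem_union_right _ (by simp [h])
      · exact Finset.mem_union_left _ (Finset.mem_filter.2 ⟨hj, h⟩)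
    have h1 := Finset.card_le_card hsub
    have h2 := Finset.card_union_le G₂ ({j | hammingDist (z j) (z i₀) = 1} : Finset (Fin n))
    have h3 := hmax (z i₀)
    omega
  have hdeg : ∀ k, (G₂.filter (fun j => z j k ≠ z i₀ k)).card ≤ M := by
    intro k
    refine le_trans (Finset.card_le_card ?_) (hmax (fl (z i₀) k))
    intro j hj
    have hj' := Finset.mem_filter.1 hj
    have hj2 : hammingDist (z j) (z i₀) = 2 := (Finset.mem_filter.1 hj'.1).2
    simp only [Finset.mem_filter, Finset.mem_univ, true_and]
    rw [hd_flip_of_ne hj'.2, hj2]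
  have hmain : ∀ j ∈ G₂, G₂.card ≤ 1 + 2*M + s
      + (G₂.filter (fun j' => j ∈ Bad j')).card := by
    intro j hj
    have hj2 : hammingDist (z j) (z i₀) = 2 := (Finset.mem_filter.1 hj).2
    set Dj : Finset (Fin n) := {k | z j k ≠ z i₀ k} with hDj
    have hDjcard : Dj.card = 2 := hj2
    have hsub : G₂ ⊆ {j} ∪ (Dj.biUnion (fun k => G₂.filter (fun j' => z j' k ≠ z i₀ k)))
        ∪ Bad j ∪ (G₂.filter (fun j' => j ∈ Bad j')) := by
      intro j' hj'
      by_cases hjj : j' = j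
      · exact Finset.mem_union_left _ (Finset.mem_union_left _
          (Finset.mem_union_left _ (by simp [hjj])))
      by_cases hBad1 : j' ∈ Bad j
      · exact Finset.mem_union_left _ (Finset.mem_union_right _ hBad1)
      by_cases hBad2 : j ∈ Bad j'
      · exact Finset.mem_union_right _ (Finset.mem_filter.2 ⟨hj', hBad2⟩)
      have hle : hammingDist (z j) (z j') ≤ 2 :=
        hlink j j' (Ne.symm hjj) hBad1 hBad2
      have hj'2 : hammingDist (z j') (z i₀) = 2 := (Finset.mem_filter.1 hj').2
      have hexk : ∃ k ∈ Dj, z j' k ≠ z i₀ k := by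
        by_contra hnone
        push_neg at hnone
        have hmemDj : ∀ k : Fin n, z j k ≠ z i₀ k → k ∈ Dj := by
          intro k hk
          simp only [hDj, Finset.mem_filter, Finset.mem_univ, true_and]
          exact hk
        have hDj' : ∀ k : Fin n, k ∈ Dj → z j k ≠ z i₀ k := by
          intro k hk
          simp only [hDj, Finset.mem_filter, Finset.mem_univ, true_and] at hk
          exact hk
        have hdisj : Disjoint Dj ({k | z j' k ≠ z i₀ k} : Finset (Fin n)) := by
          rw [Finset.disjoint_left]
          intro k hk hk'
          simp only [Finset.mem_filter, Finset.mem_univ, true_and] at hk'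
          exact hk' (hnone k hk)
        have hsub2 : Dj ∪ ({k | z j' k ≠ z i₀ k} : Finset (Fin n))
            ⊆ ({k | z j k ≠ z j' k} : Finset (Fin n)) := by
          intro k hk
          simp only [Finset.mem_filter, Finset.mem_univ, true_and]
          rcases Finset.mem_union.1 hk with hk | hk
          · have hk1 : z j k ≠ z i₀ k := hDj' k hk
            have hk2 : z j' k = z i₀ k := hnone k hk
            rw [hk2]
            exact hk1
          · have hk1 : z j' k ≠ z i₀ k := by
              simpa only [Finset.mem_filter, Finset.mem_univ, true_and] using hk
            have hk2 : z j k = z i₀ k := by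
              by_contra hzz
              exact hk1 (hnone k (hmemDj k hzz))
            rw [hk2]
            exact fun h => hk1 h.symm
        have hcu : (Dj ∪ ({k | z j' k ≠ z i₀ k} : Finset (Fin n))).card = 4 := by
          rw [Finset.card_union_of_disjoint hdisj]
          have h9 : ({k | z j' k ≠ z i₀ k} : Finset (Fin n)).card = 2 := hj'2
          omega
        have h10 := Finset.card_le_card hsub2
        have hcd : ({k | z j k ≠ z j' k} : Finset (Fin n)).card
            = hammingDist (z j) (z j') := rfl
        omega
      obtain ⟨k, hk, hk'⟩ := hexk
      refine Finset.mem_union_left _ (Finset.mem_union_left _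
        (Finset.mem_union_right _ ?_))
      exact Finset.mem_biUnion.2 ⟨k, hk, Finset.mem_filter.2 ⟨hj', hk'⟩⟩
    have h1 := Finset.card_le_card hsub
    have h2 := Finset.card_union_le ({j} ∪ (Dj.biUnion (fun k => G₂.filter
      (fun j' => z j' k ≠ z i₀ k))) ∪ Bad j) (G₂.filter (fun j' => j ∈ Bad j'))
    have h3 := Finset.card_union_le ({j} ∪ (Dj.biUnion (fun k => G₂.filter
      (fun j' => z j' k ≠ z i₀ k)))) (Bad j)
    have h4 := Finset.card_union_le ({j} : Finset (Fin n)) (Dj.biUnion (fun k => G₂.filter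
      (fun j' => z j' k ≠ z i₀ k)))
    have h5 : (Dj.biUnion (fun k => G₂.filter (fun j' => z j' k ≠ z i₀ k))).card ≤ 2 * M := by
      calc (Dj.biUnion (fun k => G₂.filter (fun j' => z j' k ≠ z i₀ k))).card
          ≤ ∑ k ∈ Dj, (G₂.filter (fun j' => z j' k ≠ z i₀ k)).card :=
            Finset.card_biUnion_le
        _ ≤ ∑ _k ∈ Dj, M := Finset.sum_le_sum (fun k _ => hdeg k)
        _ = 2 * M := by rw [Finset.sum_const, smul_eq_mul, hDjcard]
    have h6 := hBad j
    have h7 : ({j} : Finset (Fin n)).card = 1 := Finset.card_singleton _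
    omega
  -- sum over j ∈ G₂
  have hG2pos : 0 < G₂.card := by omega
  have hsum2 : G₂.card * G₂.card ≤ G₂.card * (1 + 2*M + s) + G₂.card * s := by
    have h1 : G₂.card * G₂.card = ∑ _j ∈ G₂, G₂.card := by
      rw [Finset.sum_const, smul_eq_mul]
    have h2 : ∑ _j ∈ G₂, G₂.card ≤ ∑ j ∈ G₂, (1 + 2*M + s
        + (G₂.filter (fun j' => j ∈ Bad j')).card) := Finset.sum_le_sum hmain
    have h3 : ∑ j ∈ G₂, (1 + 2*M + s + (G₂.filter (fun j' => j ∈ Bad j')).card)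
        = G₂.card * (1 + 2*M + s) + ∑ j ∈ G₂, (G₂.filter (fun j' => j ∈ Bad j')).card := by
      rw [Finset.sum_add_distrib, Finset.sum_const, smul_eq_mul]
    have h4 : ∑ j ∈ G₂, (G₂.filter (fun j' => j ∈ Bad j')).card ≤ G₂.card * s :=
      sum_card_filter_mem G₂ G₂ Bad hBad
    omega
  have hdiv : G₂.card ≤ (1 + 2*M + s) + s := by
    have : G₂.card * G₂.card ≤ G₂.card * ((1 + 2*M + s) + s) := by
      calc G₂.card * G₂.card ≤ G₂.card * (1 + 2*M + s) + G₂.card * s := hsum2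
        _ = G₂.card * ((1 + 2*M + s) + s) := by ring
    exact Nat.le_of_mul_le_mul_left this hG2pos
  omega


end Helpers

/-- Corollary 3.13 (bothways): if `f` is an `s(n)`-approximately local diagonal bijection,
the graph with edges `{uv ∈ E(Q_n) : f(u)f_⋆(v), f(v)f_⋆(u) ∈ E(Q_n)}` has minimum degree
at least `n - K s(n)`. -/
theorem diagonal_rigid_graph
    (s : ℕ → ℕ) (hs : Tendsto s atTop atTop)
    (hso : (fun n => (s n : ℝ)) =o[atTop] fun n => (n : ℝ)) :
    ∃ K : ℝ, 1 < K ∧ ∀ᶠ n : ℕ in atTop, ∀ f : V n ≃ V n,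
      ApproxLocalF n (s n) ⇑f →
      dualF n (dualF n ⇑f) = ⇑f →
      ∀ v : V n,
        (n : ℝ) - K * s n ≤
          (({u : V n | (Q n).Adj v u ∧ (Q n).Adj (f u) (dualF n ⇑f v) ∧
              (Q n).Adj (f v) (dualF n ⇑f u)}).ncard : ℝ) := by
  refine ⟨5, by norm_num, ?_⟩
  have h4 : ∀ᶠ n : ℕ in atTop, 4 ≤ s n := hs.eventually_ge_atTop 4
  have h100 : ∀ᶠ n : ℕ in atTop, 100 * s n ≤ n := by
    have hb := hso.def (by norm_num : (0:ℝ) < 1/100)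
    filter_upwards [hb] with n hn
    rw [Real.norm_eq_abs, Real.norm_eq_abs, abs_of_nonneg (by positivity),
      abs_of_nonneg (by positivity)] at hn
    have h1 : (100 : ℝ) * s n ≤ n := by linarith
    exact_mod_cast h1
  filter_upwards [h4, h100] with n hs4 hn100
  intro f hf hdiag v
  obtain ⟨g, hg⟩ := hf
  have hn2 : 2 * s n + 2 < n := by omega
  have hzinj : Function.Injective (fun i : Fin n => dualF n ⇑f (fl v i)) :=
    z_injective f.injective hg hn2 v
  set Bad : Fin n → Finset (Fin n) := fun i =>
    Finset.univ.filter
      (fun j => ¬ hammingDist (f (fl (fl v i) j)) (dualF n ⇑f (fl v i)) = 1) with hBadDef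
  have hBadCard : ∀ i, (Bad i).card ≤ s n := by
    intro i
    have h1 : n ≤ (Finset.univ.filter
        (fun j => hammingDist (f (fl (fl v i) j)) (dualF n ⇑f (fl v i)) = 1)).card + s n :=
      card_goodIdx_dual f.injective hg (fl v i)
    have h2 := Finset.card_filter_add_card_filter_not
      (s := (Finset.univ : Finset (Fin n)))
      (p := fun j => hammingDist (f (fl (fl v i) j)) (dualF n ⇑f (fl v i)) = 1)
    rw [Finset.card_univ, Fintype.card_fin] at h2
    have h3 : (Bad i).card = (Finset.univ.filter
        (fun j => ¬ hammingDist (f (fl (fl v i) j)) (dualF n ⇑f (fl v i)) = 1)).card := by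
      rw [hBadDef]
    omega
  have hlink : ∀ i j : Fin n, i ≠ j → j ∉ Bad i → i ∉ Bad j →
      hammingDist (dualF n ⇑f (fl v i)) (dualF n ⇑f (fl v j)) ≤ 2 := by
    intro i j hij hbi hbj
    simp only [hBadDef, Finset.mem_filter, Finset.mem_univ, true_and, not_not] at hbi hbj
    have h1 : hammingDist (dualF n ⇑f (fl v i)) (f (fl (fl v i) j)) = 1 := by
      rw [hammingDist_comm]; exact hbi
    have h2 : hammingDist (f (fl (fl v i) j)) (dualF n ⇑f (fl v j)) = 1 := by
      rw [flip_comm hij]; exact hbj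
    calc hammingDist (dualF n ⇑f (fl v i)) (dualF n ⇑f (fl v j))
        ≤ hammingDist (dualF n ⇑f (fl v i)) (f (fl (fl v i) j))
          + hammingDist (f (fl (fl v i) j)) (dualF n ⇑f (fl v j)) :=
          hammingDist_triangle _ _ _
      _ ≤ 2 := by rw [h1, h2]
  have hdv : dualF n (dualF n ⇑f) v = f v := congrFun hdiag v
  have hmax : ∀ w : V n, (goodIdx (dualF n ⇑f) v w).card
      ≤ (goodIdx (dualF n ⇑f) v (f v)).card := by
    intro w
    have e1 := ncard_inter' (dualF n ⇑f) v w hzinj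
    have e2 := ncard_inter' (dualF n ⇑f) v (f v) hzinj
    have e3 := dualF_spec (dualF n ⇑f) v w
    rw [hdv] at e3
    omega
  have hcore : (Finset.univ.filter
      (fun i => ¬ hammingDist (dualF n ⇑f (fl v i)) (f v) = 1)).card ≤ 3 * s n :=
    core hs4 hn100 (fun i => dualF n ⇑f (fl v i)) hzinj Bad hBadCard hlink (f v) hmax
  set T : Finset (Fin n) := Finset.univ.filter (fun i =>
      hammingDist (f (fl v i)) (dualF n ⇑f v) = 1 ∧
      hammingDist (f v) (dualF n ⇑f (fl v i)) = 1) with hT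
  have hsetEq : {u : V n | (Q n).Adj v u ∧ (Q n).Adj (f u) (dualF n ⇑f v) ∧
      (Q n).Adj (f v) (dualF n ⇑f u)} = ↑(T.image (fl v)) := by
    ext u
    simp only [Set.mem_setOf_eq, Finset.coe_image, Set.mem_image, Finset.mem_coe, hT,
      Finset.mem_filter, Finset.mem_univ, true_and]
    constructor
    · rintro ⟨h1, h2, h3⟩
      have hu : hammingDist u v = 1 := by
        rw [adj_iff] at h1
        rw [hammingDist_comm]
        exact h1
      obtain ⟨i, rfl⟩ := hd_eq_one_iff.1 hu
      exact ⟨i, ⟨adj_iff.1 h2, adj_iff.1 h3⟩, rfl⟩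
    · rintro ⟨i, ⟨h2, h3⟩, rfl⟩
      refine ⟨?_, adj_iff.2 h2, adj_iff.2 h3⟩
      rw [adj_iff, hammingDist_comm]
      exact hd_flip_self v i
  rw [hsetEq, Set.ncard_coe_finset,
    Finset.card_image_of_injective _ (flip_right_injective v)]
  have hB0 : (Finset.univ.filter
      (fun i => ¬ hammingDist (f (fl v i)) (dualF n ⇑f v) = 1)).card ≤ s n := by
    have h1 : n ≤ (Finset.univ.filter
        (fun j => hammingDist (f (fl v j)) (dualF n ⇑f v) = 1)).card + s n :=
      card_goodIdx_dual f.injective hg v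
    have h2 := Finset.card_filter_add_card_filter_not
      (s := (Finset.univ : Finset (Fin n)))
      (p := fun j => hammingDist (f (fl v j)) (dualF n ⇑f v) = 1)
    rw [Finset.card_univ, Fintype.card_fin] at h2
    omega
  have hcover : (Finset.univ : Finset (Fin n)) ⊆ T
      ∪ (Finset.univ.filter (fun i => ¬ hammingDist (f (fl v i)) (dualF n ⇑f v) = 1))
      ∪ (Finset.univ.filter (fun i => ¬ hammingDist (dualF n ⇑f (fl v i)) (f v) = 1)) := by
    intro i _
    by_cases hc1 : hammingDist (f (fl v i)) (dualF n ⇑f v) = 1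
    · by_cases hc2 : hammingDist (f v) (dualF n ⇑f (fl v i)) = 1
      · exact Finset.mem_union_left _ (Finset.mem_union_left _
          (Finset.mem_filter.2 ⟨Finset.mem_univ i, hc1, hc2⟩))
      · refine Finset.mem_union_right _ (Finset.mem_filter.2 ⟨Finset.mem_univ i, ?_⟩)
        rw [hammingDist_comm]
        exact hc2
    · exact Finset.mem_union_left _ (Finset.mem_union_right _
        (Finset.mem_filter.2 ⟨Finset.mem_univ i, hc1⟩))
  have hcard : n ≤ T.card + 4 * s n := by
    have h1 := Finset.card_le_card hcover
    rw [Finset.card_univ, Fintype.card_fin] at h1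
    have h2 := Finset.card_union_le (T
      ∪ (Finset.univ.filter (fun i => ¬ hammingDist (f (fl v i)) (dualF n ⇑f v) = 1)))
      (Finset.univ.filter (fun i => ¬ hammingDist (dualF n ⇑f (fl v i)) (f v) = 1))
    have h3 := Finset.card_union_le T
      (Finset.univ.filter (fun i => ¬ hammingDist (f (fl v i)) (dualF n ⇑f v) = 1))
    omega
  have hsreal : (0:ℝ) ≤ (s n : ℝ) := Nat.cast_nonneg _
  have hcast : (n : ℝ) ≤ (T.card : ℝ) + 4 * s n := by exact_mod_cast hcard
  linarith

end
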